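/- Let k ≥ 1 be an integer and let Φ be as in the context. Define P_k on X_k by (P_k x)_n(j) = (k·2^n)^{1/q} Φ_{n,j}(x) for n ≥ 0, 1 ≤ j ≤ k·2^n. Then for every x ∈ X_k, P_k x ∈ Y_k and ‖P_k x‖ ≤ q² ‖x‖; and P_k y = y for every y ∈ Y_k. In particular, P_k is a bounded linear projection from X_k onto Y_k of norm at most q². -/

import Mathlib

open MeasureTheory Set ENNReal

/-- The weak `L^p` "norm": `sup { (∫_B |f| dμ) / μ(B)^(1/q) }` over measurable `B`
with `0 < μ B < ∞`, computed in `ℝ≥0∞`. -/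
noncomputable def wnorm {α : Type*} [MeasurableSpace α] (q : ℝ) (μ : Measure α)
    (f : α → ℝ) : ℝ≥0∞ :=
  ⨆ (B : Set α) (_ : MeasurableSet B ∧ 0 < μ B ∧ μ B < ⊤),
    (∫⁻ x in B, ENNReal.ofReal |f x| ∂μ) / μ B ^ (1 / q)

/-- The set `{f ≠ 0}` is σ-finite for `μ`. -/
def SigmaFinSupp {α : Type*} [MeasurableSpace α] (μ : Measure α) (f : α → ℝ) : Prop :=
  ∃ s : ℕ → Set α, {x | f x ≠ 0} ⊆ (⋃ n, s n) ∧ ∀ n, μ (s n) < ⊤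

/-- Membership in the weak `L^p` space. -/
def MemW {α : Type*} [MeasurableSpace α] (q : ℝ) (μ : Measure α) (f : α → ℝ) : Prop :=
  Measurable f ∧ SigmaFinSupp μ f ∧ wnorm q μ f < ⊤

/-- The ambient space of `X_k = (∑_{n≥0} ⊕ ℓ^{p,∞}(k·2^n))_{ℓ∞}`: all sequences
`x = (x_n)` with `x_n` a `k·2^n`-tuple of reals. -/
abbrev XFull (k : ℕ) := (n : ℕ) → Fin (k * 2 ^ n) → ℝ

/-- The norm of `X_k`: `sup_n ‖x_n‖`, where `‖·‖` is the weak `ℓ^p` norm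
(counting measure on `Fin (k·2^n)`). -/
noncomputable def Xnorm (q : ℝ) (k : ℕ) (x : XFull k) : ℝ≥0∞ :=
  ⨆ n, wnorm q (Measure.count : Measure (Fin (k * 2 ^ n))) (x n)

/-- Membership in `X_k`. -/
def MemX (q : ℝ) (k : ℕ) (x : XFull k) : Prop := Xnorm q k x < ⊤

lemma two_mul_succ_lt {k n j : ℕ} (h : j < k * 2 ^ n) : 2 * j + 1 < k * 2 ^ (n + 1) := by
  rw [pow_succ, ← mul_assoc]; omega

/-- `Y_k ⊆ X_k`: elements satisfying `x_n(j) = 2^{-1/q}(x_{n+1}(2j-1) + x_{n+1}(2j))`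
(0-indexed: the children of `j` are `2j` and `2j+1`). -/
def Yset (q : ℝ) (k : ℕ) : Set (XFull k) :=
  {x | MemX q k x ∧ ∀ (n : ℕ) (j : Fin (k * 2 ^ n)),
    x n j = (2 : ℝ) ^ (-(1 / q)) *
      (x (n + 1) ⟨2 * (j : ℕ), by have := two_mul_succ_lt j.isLt; omega⟩ +
       x (n + 1) ⟨2 * (j : ℕ) + 1, two_mul_succ_lt j.isLt⟩)}

/-- `Z_k ⊆ X_k`: elements whose coordinate sums eventually vanish. -/
def Zset (q : ℝ) (k : ℕ) : Set (XFull k) :=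
  {x | MemX q k x ∧ ∃ i : ℕ, ∀ n ≥ i, ∑ j, x n j = 0}

/-- The element `u ∈ X_k`, `u_n(j) = (k·2^n)^{-1/p}`. -/
noncomputable def uElt (p : ℝ) (k : ℕ) : XFull k :=
  fun n _ => ((k : ℝ) * 2 ^ n) ^ (-(1 / p))

/-- Coordinatewise multiplication of `x ∈ X_k` by the indicator of a set of index pairs. -/
noncomputable def chiMul {k : ℕ} (A : (m : ℕ) → Set (Fin (k * 2 ^ m))) (x : XFull k) :
    XFull k :=
  fun m => (A m).indicator (x m)

/-- The index set `A_{n,j}` (the support of `T_k χ_{[(j-1)/2^n, j/2^n]}`): pairs `(m,i)`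
such that the dyadic interval of `(m,i)` meets that of `(n,j)` in positive Lebesgue
measure (all indices 0-indexed). -/
def Aset (k n : ℕ) (j : Fin (k * 2 ^ n)) : (m : ℕ) → Set (Fin (k * 2 ^ m)) :=
  fun m => {i | 0 < volume (Icc ((i : ℕ) / 2 ^ m : ℝ) (((i : ℕ) + 1) / 2 ^ m) ∩
    Icc ((j : ℕ) / 2 ^ n : ℝ) (((j : ℕ) + 1) / 2 ^ n))}

/-- The projection `P_k : X_k → X_k`, `(P_k x)_n(j) = (k·2^n)^{1/q} Φ_{n,j}(x)`. -/
noncomputable def Pk (q : ℝ) (k : ℕ) (Φ : XFull k → ℝ) (x : XFull k) : XFull k :=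
  fun n j => ((k : ℝ) * 2 ^ n) ^ (1 / q) * Φ (chiMul (Aset k n j) x)


/-! ### Auxiliary lemmas -/

section Aux

lemma setLint_aux {N : ℕ} (F : Finset (Fin N)) (f : Fin N → ℝ) :
    ∫⁻ x in (↑F : Set (Fin N)), ENNReal.ofReal |f x| ∂Measure.count
      = ∑ i ∈ F, ENNReal.ofReal |f i| := by
  rw [← lintegral_indicator (↑F : Set (Fin N)).to_countable.measurableSet,
    MeasureTheory.lintegral_count, tsum_fintype, Finset.sum_indicator_eq_sum_filter]
  simp

lemma sum_le_wnorm {q : ℝ} {N : ℕ} (hq : 0 < q) (f : Fin N → ℝ) (F : Finset (Fin N)) :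
    ∑ i ∈ F, ENNReal.ofReal |f i| ≤ wnorm q Measure.count f * (F.card : ℝ≥0∞) ^ (1/q) := by
  rcases F.eq_empty_or_nonempty with rfl | hF
  · simp
  have hμ : Measure.count (↑F : Set (Fin N)) = (F.card : ℝ≥0∞) := Measure.count_apply_finset F
  have hcard : (0:ℝ≥0∞) < F.card := by exact_mod_cast Finset.card_pos.2 hF
  have h0 : 0 < Measure.count (↑F : Set (Fin N)) := by rw [hμ]; exact hcard
  have hlt : Measure.count (↑F : Set (Fin N)) < ⊤ := by rw [hμ]; exact natCast_lt_top _
  have hle : (∫⁻ x in (↑F : Set (Fin N)), ENNReal.ofReal |f x| ∂Measure.count)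
      / (Measure.count (↑F : Set (Fin N))) ^ (1/q) ≤ wnorm q Measure.count f :=
    le_iSup_of_le (↑F : Set (Fin N))
      (le_iSup_of_le ⟨(↑F : Set (Fin N)).to_countable.measurableSet, h0, hlt⟩ le_rfl)
  rw [setLint_aux, hμ] at hle
  have hc0 : ((F.card : ℝ≥0∞)) ^ (1/q) ≠ 0 :=
    (ENNReal.rpow_pos hcard (natCast_ne_top _)).ne'
  have hct : ((F.card : ℝ≥0∞)) ^ (1/q) ≠ ⊤ :=
    ENNReal.rpow_ne_top_of_nonneg (by positivity) (natCast_ne_top _)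
  calc ∑ i ∈ F, ENNReal.ofReal |f i|
      = (∑ i ∈ F, ENNReal.ofReal |f i|) / ((F.card:ℝ≥0∞))^(1/q) * ((F.card:ℝ≥0∞))^(1/q) := by
        rw [ENNReal.div_mul_cancel hc0 hct]
    _ ≤ wnorm q Measure.count f * ((F.card:ℝ≥0∞))^(1/q) := mul_le_mul_left hle _

lemma wnorm_le {q : ℝ} {N : ℕ} {C : ℝ≥0∞} (f : Fin N → ℝ)
    (h : ∀ F : Finset (Fin N), F.Nonempty →
      ∑ i ∈ F, ENNReal.ofReal |f i| ≤ C * (F.card : ℝ≥0∞) ^ (1/q)) :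
    wnorm q Measure.count f ≤ C := by
  refine iSup_le fun B => iSup_le fun hB => ?_
  obtain ⟨-, h0, -⟩ := hB
  set F := B.toFinite.toFinset with hF
  have hBF : B = ↑F := by simp [hF]
  have hFne : F.Nonempty := by
    rcases B.eq_empty_or_nonempty with rfl | ⟨i, hi⟩
    · simp at h0
    · exact ⟨i, by simp [hF, hi]⟩
  rw [hBF, setLint_aux, Measure.count_apply_finset F]
  exact ENNReal.div_le_of_le_mul (h F hFne)

lemma wnorm_mono {q : ℝ} {N : ℕ} (hq : 0 < q) {f g : Fin N → ℝ}
    (h : ∀ i, |f i| ≤ |g i|) :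
    wnorm q Measure.count f ≤ wnorm q Measure.count g :=
  wnorm_le f fun F _ => le_trans
    (Finset.sum_le_sum fun i _ => ENNReal.ofReal_le_ofReal (h i))
    (sum_le_wnorm hq g F)

lemma wnorm_le_add {q : ℝ} {N : ℕ} (hq : 0 < q) {f g h : Fin N → ℝ}
    (hfg : ∀ i, |f i| ≤ |g i| + |h i|) :
    wnorm q Measure.count f ≤ wnorm q Measure.count g + wnorm q Measure.count h := by
  refine wnorm_le f fun F _ => ?_
  calc ∑ i ∈ F, ENNReal.ofReal |f i|
      ≤ ∑ i ∈ F, (ENNReal.ofReal |g i| + ENNReal.ofReal |h i|) := by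
        refine Finset.sum_le_sum fun i _ => ?_
        rw [← ENNReal.ofReal_add (abs_nonneg _) (abs_nonneg _)]
        exact ENNReal.ofReal_le_ofReal (hfg i)
    _ = (∑ i ∈ F, ENNReal.ofReal |g i|) + ∑ i ∈ F, ENNReal.ofReal |h i| :=
        Finset.sum_add_distrib
    _ ≤ wnorm q Measure.count g * (F.card : ℝ≥0∞) ^ (1/q)
        + wnorm q Measure.count h * (F.card : ℝ≥0∞) ^ (1/q) :=
        add_le_add (sum_le_wnorm hq g F) (sum_le_wnorm hq h F)
    _ = (wnorm q Measure.count g + wnorm q Measure.count h) * (F.card : ℝ≥0∞) ^ (1/q) :=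
        (add_mul _ _ _).symm

lemma wnorm_smul_le {q : ℝ} {N : ℕ} (hq : 0 < q) (c : ℝ) (f : Fin N → ℝ) :
    wnorm q Measure.count (fun i => c * f i)
      ≤ ENNReal.ofReal |c| * wnorm q Measure.count f := by
  refine wnorm_le _ fun F _ => ?_
  calc ∑ i ∈ F, ENNReal.ofReal |c * f i|
      = ENNReal.ofReal |c| * ∑ i ∈ F, ENNReal.ofReal |f i| := by
        rw [Finset.mul_sum]
        refine Finset.sum_congr rfl fun i _ => ?_
        rw [abs_mul, ENNReal.ofReal_mul (abs_nonneg c)]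
    _ ≤ ENNReal.ofReal |c| * (wnorm q Measure.count f * (F.card : ℝ≥0∞) ^ (1/q)) :=
        mul_le_mul_right (sum_le_wnorm hq f F) _
    _ = ENNReal.ofReal |c| * wnorm q Measure.count f * (F.card : ℝ≥0∞) ^ (1/q) :=
        (mul_assoc _ _ _).symm

lemma wnorm_const_le {q : ℝ} {N : ℕ} (hq : 1 < q) {a : ℝ} {C : ℝ≥0∞}
    (h : (N : ℝ≥0∞) ^ (1 - 1/q) * ENNReal.ofReal |a| ≤ C) :
    wnorm q Measure.count (fun _ : Fin N => a) ≤ C := by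
  have hq0 : 0 < q := lt_trans one_pos hq
  refine wnorm_le _ fun F hF => ?_
  have hcard0 : (0:ℝ≥0∞) < F.card := by exact_mod_cast Finset.card_pos.2 hF
  have hcardN : (F.card : ℝ≥0∞) ≤ (N : ℝ≥0∞) := by
    have := Finset.card_le_card (Finset.subset_univ F)
    rw [Finset.card_univ, Fintype.card_fin] at this
    exact_mod_cast this
  calc ∑ _i ∈ F, ENNReal.ofReal |a| = (F.card : ℝ≥0∞) * ENNReal.ofReal |a| := by
        rw [Finset.sum_const, nsmul_eq_mul]
    _ = (F.card : ℝ≥0∞) ^ (1/q) * ((F.card : ℝ≥0∞) ^ (1 - 1/q) * ENNReal.ofReal |a|) := by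
        rw [← mul_assoc, ← ENNReal.rpow_add _ _ hcard0.ne' (natCast_ne_top _)]
        norm_num
    _ ≤ (F.card : ℝ≥0∞) ^ (1/q) * ((N : ℝ≥0∞) ^ (1 - 1/q) * ENNReal.ofReal |a|) := by
        refine mul_le_mul_right (mul_le_mul_left ?_ _) _
        have h1q : (0:ℝ) ≤ 1 - 1/q := by
          have : 1/q < 1 := by
            rw [div_lt_one hq0]; exact hq
          linarith
        exact ENNReal.rpow_le_rpow hcardN h1q
    _ ≤ (F.card : ℝ≥0∞) ^ (1/q) * C := mul_le_mul_right h _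
    _ = C * (F.card : ℝ≥0∞) ^ (1/q) := mul_comm _ _

lemma le_Xnorm {q : ℝ} {k : ℕ} (x : XFull k) (n : ℕ) :
    wnorm q Measure.count (x n) ≤ Xnorm q k x :=
  le_iSup (fun n => wnorm q Measure.count (x n)) n

lemma Xnorm_le {q : ℝ} {k : ℕ} {C : ℝ≥0∞} (x : XFull k)
    (h : ∀ n, wnorm q Measure.count (x n) ≤ C) : Xnorm q k x ≤ C := iSup_le h

lemma Xnorm_mono {q : ℝ} {k : ℕ} (hq : 0 < q) {x y : XFull k}
    (h : ∀ n i, |x n i| ≤ |y n i|) : Xnorm q k x ≤ Xnorm q k y :=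
  Xnorm_le x fun n => le_trans (wnorm_mono hq (h n)) (le_Xnorm y n)

lemma Xnorm_add_le {q : ℝ} {k : ℕ} (hq : 0 < q) (x y : XFull k) :
    Xnorm q k (x + y) ≤ Xnorm q k x + Xnorm q k y :=
  Xnorm_le _ fun n => le_trans
    (wnorm_le_add hq (fun i => by simpa using abs_add_le (x n i) (y n i)))
    (add_le_add (le_Xnorm x n) (le_Xnorm y n))

lemma Xnorm_sub_le {q : ℝ} {k : ℕ} (hq : 0 < q) (x y : XFull k) :
    Xnorm q k (x - y) ≤ Xnorm q k x + Xnorm q k y :=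
  Xnorm_le _ fun n => le_trans
    (wnorm_le_add hq (fun i => by simpa using abs_sub (x n i) (y n i)))
    (add_le_add (le_Xnorm x n) (le_Xnorm y n))

lemma Xnorm_smul_le {q : ℝ} {k : ℕ} (hq : 0 < q) (c : ℝ) (x : XFull k) :
    Xnorm q k (c • x) ≤ ENNReal.ofReal |c| * Xnorm q k x :=
  Xnorm_le _ fun n => le_trans (wnorm_smul_le hq c (x n))
    (mul_le_mul_right (le_Xnorm x n) _)

lemma MemX.add {q : ℝ} {k : ℕ} (hq : 0 < q) {x y : XFull k} (hx : MemX q k x)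
    (hy : MemX q k y) : MemX q k (x + y) :=
  lt_of_le_of_lt (Xnorm_add_le hq x y) (ENNReal.add_lt_top.2 ⟨hx, hy⟩)

lemma MemX.sub {q : ℝ} {k : ℕ} (hq : 0 < q) {x y : XFull k} (hx : MemX q k x)
    (hy : MemX q k y) : MemX q k (x - y) :=
  lt_of_le_of_lt (Xnorm_sub_le hq x y) (ENNReal.add_lt_top.2 ⟨hx, hy⟩)

lemma MemX.smul {q : ℝ} {k : ℕ} (hq : 0 < q) {x : XFull k} (c : ℝ) (hx : MemX q k x) :
    MemX q k (c • x) :=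
  lt_of_le_of_lt (Xnorm_smul_le hq c x)
    (ENNReal.mul_lt_top ofReal_lt_top hx)

lemma MemX.chiMul {q : ℝ} {k : ℕ} (hq : 0 < q) {x : XFull k}
    (A : (m : ℕ) → Set (Fin (k * 2 ^ m))) (hx : MemX q k x) :
    MemX q k (chiMul A x) := by
  refine lt_of_le_of_lt (Xnorm_mono hq fun n i => ?_) hx
  by_cases hi : i ∈ A n <;>
    simp [_root_.chiMul, Set.indicator_apply, hi, abs_nonneg]

end Aux


section Index

lemma aux_div_lt {a b : ℝ} (n e : ℕ) : a / 2^(n+e) < b / 2^n ↔ a < b * 2^e := by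
  rw [pow_add, div_lt_div_iff₀ (by positivity) (by positivity), mul_comm ((2:ℝ)^n) ((2:ℝ)^e),
    ← mul_assoc, mul_lt_mul_iff_of_pos_right (by positivity : (0:ℝ) < 2^n)]

lemma aux_lt_div {a b : ℝ} (n e : ℕ) : b / 2^n < a / 2^(n+e) ↔ b * 2^e < a := by
  rw [pow_add, div_lt_div_iff₀ (by positivity) (by positivity), mul_comm ((2:ℝ)^n) ((2:ℝ)^e),
    ← mul_assoc, mul_lt_mul_iff_of_pos_right (by positivity : (0:ℝ) < 2^n)]

lemma mem_Aset {k n m : ℕ} {j : Fin (k*2^n)} {i : Fin (k*2^m)} :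
    i ∈ Aset k n j m ↔
      ((i:ℕ):ℝ)/2^m < (((j:ℕ):ℝ)+1)/2^n ∧ ((j:ℕ):ℝ)/2^n < (((i:ℕ):ℝ)+1)/2^m := by
  have hm : (0:ℝ) < 2^m := by positivity
  have hn : (0:ℝ) < 2^n := by positivity
  have hab : ((i:ℕ):ℝ)/2^m < (((i:ℕ):ℝ)+1)/2^m := by
    rw [div_lt_div_iff₀ hm hm]; nlinarith
  have hcd : ((j:ℕ):ℝ)/2^n < (((j:ℕ):ℝ)+1)/2^n := by
    rw [div_lt_div_iff₀ hn hn]; nlinarith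
  show 0 < volume _ ↔ _
  rw [Set.Icc_inter_Icc, Real.volume_Icc, ENNReal.ofReal_pos, sub_pos, sup_lt_iff,
    lt_inf_iff, lt_inf_iff]
  constructor
  · rintro ⟨⟨-, h1⟩, h2, -⟩; exact ⟨h1, h2⟩
  · rintro ⟨h1, h2⟩; exact ⟨⟨hab, h1⟩, h2, hcd⟩

lemma mem_Aset_ge {k n m : ℕ} (hnm : n ≤ m) {j : Fin (k*2^n)} {i : Fin (k*2^m)} :
    i ∈ Aset k n j m ↔ (j:ℕ)*2^(m-n) ≤ (i:ℕ) ∧ (i:ℕ) < ((j:ℕ)+1)*2^(m-n) := by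
  obtain ⟨e, rfl⟩ : ∃ e, m = n + e := ⟨m - n, by omega⟩
  have he : n + e - n = e := by omega
  rw [mem_Aset, aux_div_lt, aux_lt_div, he]
  have c1 : ((i:ℕ):ℝ) < (((j:ℕ):ℝ)+1) * 2^e ↔ (i:ℕ) < ((j:ℕ)+1)*2^e := by
    push_cast; constructor <;> intro h <;> exact_mod_cast h
  have c2 : ((j:ℕ):ℝ) * 2^e < ((i:ℕ):ℝ)+1 ↔ (j:ℕ)*2^e < (i:ℕ)+1 := by
    push_cast; constructor <;> intro h <;> exact_mod_cast h
  rw [c1, c2]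
  omega

/-- The block of indices at level `m` lying below `j` at level `n`. -/
def blockF (k n : ℕ) (j : Fin (k*2^n)) (m : ℕ) : Finset (Fin (k*2^m)) :=
  Finset.univ.filter (fun i => (j:ℕ)*2^(m-n) ≤ (i:ℕ) ∧ (i:ℕ) < ((j:ℕ)+1)*2^(m-n))

lemma blockF_card_le {k n m : ℕ} (j : Fin (k*2^n)) :
    (blockF k n j m).card ≤ 2^(m-n) := by
  have key : ((j:ℕ)+1)*2^(m-n) = (j:ℕ)*2^(m-n) + 2^(m-n) := by ring
  have : (blockF k n j m).card ≤ (Finset.range (2^(m-n))).card := by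
    refine Finset.card_le_card_of_injOn (fun i => (i:ℕ) - (j:ℕ)*2^(m-n)) ?_ ?_
    · intro i hi
      simp only [blockF, Finset.mem_coe, Finset.mem_filter] at hi
      simp only [Finset.mem_coe, Finset.mem_range]
      omega
    · intro i hi i' hi' hii'
      simp only [blockF, Finset.mem_coe, Finset.mem_filter] at hi hi'
      simp only at hii'
      exact Fin.ext (by omega)
  simpa using this

lemma blockF_disjoint {k n m : ℕ} {j j' : Fin (k*2^n)} (h : j ≠ j') :
    Disjoint (blockF k n j m) (blockF k n j' m) := by
  rw [Finset.disjoint_left]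
  intro i hi hi'
  simp only [blockF, Finset.mem_filter] at hi hi'
  have hjj : (j:ℕ) ≠ (j':ℕ) := fun hc => h (Fin.ext hc)
  rcases Nat.lt_or_ge (j:ℕ) (j':ℕ) with hlt | hge
  · have : ((j:ℕ)+1)*2^(m-n) ≤ (j':ℕ)*2^(m-n) := Nat.mul_le_mul_right _ (by omega)
    omega
  · have : ((j':ℕ)+1)*2^(m-n) ≤ (j:ℕ)*2^(m-n) := Nat.mul_le_mul_right _ (by omega)
    omega

lemma sum_chiA_level {k n m : ℕ} (hnm : n ≤ m) (j : Fin (k*2^n)) (x : XFull k) :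
    ∑ i, chiMul (Aset k n j) x m i = ∑ i ∈ blockF k n j m, x m i := by
  classical
  have h1 : ∑ i, chiMul (Aset k n j) x m i
      = ∑ i ∈ Finset.univ.filter (· ∈ Aset k n j m), x m i := by
    simp only [chiMul]
    rw [Finset.sum_indicator_eq_sum_filter]
  rw [h1]
  refine Finset.sum_congr ?_ fun _ _ => rfl
  ext i
  simp only [Finset.mem_filter, Finset.mem_univ, true_and, blockF]
  exact mem_Aset_ge hnm

lemma Aset_union {k n : ℕ} (j : Fin (k*2^n)) (m : ℕ) :
    Aset k n j m =
      Aset k (n+1) ⟨2*(j:ℕ), by have := two_mul_succ_lt j.isLt; omega⟩ m ∪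
      Aset k (n+1) ⟨2*(j:ℕ)+1, two_mul_succ_lt j.isLt⟩ m := by
  ext i
  have h2n : (0:ℝ) < 2^n := by positivity
  have h2n1 : (0:ℝ) < 2^(n+1) := by positivity
  have h2m : (0:ℝ) < 2^m := by positivity
  have f1 : (2*((j:ℕ):ℝ))/2^(n+1) = ((j:ℕ):ℝ)/2^n := by
    rw [pow_succ]; field_simp; try ring
  have f2 : (2*((j:ℕ):ℝ)+2)/2^(n+1) = (((j:ℕ):ℝ)+1)/2^n := by
    rw [pow_succ]; field_simp; try ring
  have f2' : (2*((j:ℕ):ℝ)+1+1)/2^(n+1) = (((j:ℕ):ℝ)+1)/2^n := by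
    rw [pow_succ]; field_simp; try ring
  have f3 : ((j:ℕ):ℝ)/2^n < (2*((j:ℕ):ℝ)+1)/2^(n+1) := by
    rw [div_lt_div_iff₀ h2n h2n1, pow_succ]; nlinarith
  have f4 : (2*((j:ℕ):ℝ)+1)/2^(n+1) < (((j:ℕ):ℝ)+1)/2^n := by
    rw [div_lt_div_iff₀ h2n1 h2n, pow_succ]; nlinarith
  have hxy : ((i:ℕ):ℝ)/2^m < (((i:ℕ):ℝ)+1)/2^m := by
    rw [div_lt_div_iff₀ h2m h2m]; nlinarith
  simp only [Set.mem_union, mem_Aset, Fin.val_mk]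
  push_cast
  constructor
  · rintro ⟨h1, h2⟩
    by_cases hxb : ((i:ℕ):ℝ)/2^m < (2*((j:ℕ):ℝ)+1)/2^(n+1)
    · exact Or.inl ⟨by linarith, by linarith⟩
    · push_neg at hxb
      exact Or.inr ⟨by linarith, by linarith⟩
  · rintro (⟨h1, h2⟩ | ⟨h1, h2⟩)
    · exact ⟨by linarith, by linarith⟩
    · exact ⟨by linarith, by linarith⟩

lemma Aset_inter_empty {k n : ℕ} (j : Fin (k*2^n)) {m : ℕ} (hm : n + 1 ≤ m) :
    Aset k (n+1) ⟨2*(j:ℕ), by have := two_mul_succ_lt j.isLt; omega⟩ m ∩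
      Aset k (n+1) ⟨2*(j:ℕ)+1, two_mul_succ_lt j.isLt⟩ m = ∅ := by
  ext i
  simp only [Set.mem_inter_iff, Set.mem_empty_iff_false, iff_false, not_and]
  intro h1 h2
  rw [mem_Aset_ge hm] at h1 h2
  simp only [Fin.val_mk] at h1 h2
  omega

end Index

section Phi

variable {p q : ℝ} {k : ℕ}

lemma Ncast_pos {k m : ℕ} (hk : 1 ≤ k) : (0:ℝ) < (k:ℝ) * 2^m := by
  have : (1:ℝ) ≤ (k:ℝ) := by exact_mod_cast hk
  positivity

lemma Ncast_eq (k m : ℕ) : ((k * 2^m : ℕ) : ℝ) = (k:ℝ) * 2^m := by push_cast; ring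

lemma NN_ne_zero {k m : ℕ} (hk : 1 ≤ k) : ((k * 2^m : ℕ) : ℝ≥0∞) ≠ 0 := by
  have : 0 < k * 2^m := by positivity
  exact_mod_cast this.ne'

lemma ofReal_Ncast (k m : ℕ) :
    ENNReal.ofReal ((k:ℝ) * 2^m) = ((k * 2^m : ℕ) : ℝ≥0∞) := by
  rw [← Ncast_eq, ENNReal.ofReal_natCast]

/-- `1 - 1/q = 1/p` under the conjugacy relation. -/
lemma conj_exp (hp : 1 < p) (hq : q = p / (p - 1)) : 1 - 1/q = 1/p := by
  have hp0 : p ≠ 0 := by linarith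
  have hp1 : p - 1 ≠ 0 := by intro h; apply hp.ne'; linarith
  rw [hq]
  field_simp
  ring

lemma one_lt_q (hp : 1 < p) (hq : q = p / (p - 1)) : 1 < q := by
  rw [hq]
  rw [lt_div_iff₀ (by linarith : (0:ℝ) < p - 1)]
  linarith

lemma Xnorm_uElt_le (hp : 1 < p) (hq : q = p / (p - 1)) (hk : 1 ≤ k) :
    Xnorm q k (uElt p k) ≤ 1 := by
  have hq1 : 1 < q := one_lt_q hp hq
  refine Xnorm_le _ fun m => ?_
  show wnorm q Measure.count (fun _ : Fin (k*2^m) => ((k:ℝ) * 2^m) ^ (-(1/p))) ≤ 1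
  refine wnorm_const_le hq1 ?_
  have hpos : (0:ℝ) < (k:ℝ) * 2^m := Ncast_pos hk
  have ha : |((k:ℝ) * 2^m) ^ (-(1/p))| = ((k:ℝ) * 2^m) ^ (-(1/p)) :=
    abs_of_nonneg (Real.rpow_nonneg hpos.le _)
  rw [ha, conj_exp hp hq, ← ENNReal.ofReal_rpow_of_pos hpos, ofReal_Ncast]
  rw [← ENNReal.rpow_add _ _ (NN_ne_zero hk) (natCast_ne_top _)]
  norm_num

/-- Σ-level-sum control on a tail implies a bound for `Φ`. -/
lemma Phi_tail_bound (hp : 1 < p) (hq : q = p / (p - 1)) (hk : 1 ≤ k)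
    (Φ : XFull k → ℝ)
    (hΦadd : ∀ x y : XFull k, MemX q k x → MemX q k y → Φ (x + y) = Φ x + Φ y)
    (hΦbd : ∀ x : XFull k, MemX q k x → ENNReal.ofReal |Φ x| ≤ Xnorm q k x)
    (hΦZ : ∀ z ∈ Zset q k, Φ z = 0)
    {y : XFull k} (hy : MemX q k y) {M : ℕ} {C : ℝ≥0∞}
    (h : ∀ m, M ≤ m →
      ENNReal.ofReal |∑ i, y m i| ≤ C * ((k * 2^m : ℕ) : ℝ≥0∞) ^ (1/q)) :
    ENNReal.ofReal |Φ y| ≤ C := by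
  have hq1 : 1 < q := one_lt_q hp hq
  have hq0 : 0 < q := lt_trans one_pos hq1
  rcases eq_or_ne C ⊤ with rfl | hC
  · exact le_top
  set w : XFull k := fun m _ => if M ≤ m then (∑ i', y m i') / ((k * 2^m : ℕ) : ℝ) else 0
    with hw
  have hwnorm : Xnorm q k w ≤ C := by
    refine Xnorm_le _ fun m => ?_
    by_cases hm : M ≤ m
    · simp only [hw, if_pos hm]
      refine wnorm_const_le hq1 ?_
      set N' : ℝ≥0∞ := ((k * 2^m : ℕ) : ℝ≥0∞) with hN'
      have hN0 : N' ≠ 0 := NN_ne_zero hk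
      have hNT : N' ≠ ⊤ := natCast_ne_top _
      have hNR : (0:ℝ) < ((k * 2^m : ℕ) : ℝ) := by rw [Ncast_eq]; exact Ncast_pos hk
      have habs : |(∑ i', y m i') / ((k * 2^m : ℕ) : ℝ)|
          = |∑ i', y m i'| / ((k * 2^m : ℕ) : ℝ) := by
        rw [abs_div, abs_of_pos hNR]
      rw [habs, ENNReal.ofReal_div_of_pos hNR, ENNReal.ofReal_natCast]
      have e1 : N' ^ (1 - 1/q) * N' ^ (1/q) = N' := by
        rw [← ENNReal.rpow_add _ _ hN0 hNT]; norm_num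
      calc N' ^ (1 - 1/q) * (ENNReal.ofReal |∑ i', y m i'| / N')
          ≤ N' ^ (1 - 1/q) * (C * N' ^ (1/q) / N') := by
            exact mul_le_mul_right (ENNReal.div_le_div_right (h m hm) _) _
        _ = C * (N' ^ (1 - 1/q) * N' ^ (1/q)) * N'⁻¹ := by
            simp only [div_eq_mul_inv]; ring
        _ = C := by rw [e1, mul_assoc, ENNReal.mul_inv_cancel hN0 hNT, mul_one]
    · simp only [hw, if_neg hm]
      refine wnorm_const_le hq1 ?_
      simp
  have hwMem : MemX q k w := lt_of_le_of_lt hwnorm (lt_top_iff_ne_top.2 hC)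
  have hzZ : y - w ∈ Zset q k := by
    refine ⟨MemX.sub hq0 hy hwMem, M, fun m hm => ?_⟩
    have hNR : ((k * 2^m : ℕ) : ℝ) ≠ 0 := by
      rw [Ncast_eq]; exact (Ncast_pos hk).ne'
    have : ∑ i, (y - w) m i = (∑ i, y m i) - ∑ i, w m i := by
      simp [Finset.sum_sub_distrib]
    rw [this]
    simp only [hw, if_pos hm]
    rw [Finset.sum_const, Finset.card_univ, Fintype.card_fin, nsmul_eq_mul]
    field_simp
    ring
  have hΦyw : Φ y = Φ w := by
    have h1 := hΦadd (y - w) w (MemX.sub hq0 hy hwMem) hwMem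
    rw [sub_add_cancel] at h1
    rw [h1, hΦZ _ hzZ, zero_add]
  rw [hΦyw]
  exact le_trans (hΦbd w hwMem) hwnorm

lemma MemX_zero (hq0 : 0 < q) : MemX q k (0 : XFull k) := by
  have : Xnorm q k (0 : XFull k) ≤ 0 := Xnorm_le _ fun n => wnorm_le _ (by simp)
  exact lt_of_le_of_lt this (by norm_num)

lemma Phi_zero (hq0 : 0 < q)
    (Φ : XFull k → ℝ)
    (hΦsmul : ∀ (c : ℝ) (x : XFull k), MemX q k x → Φ (c • x) = c * Φ x) :
    Φ 0 = 0 := by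
  have := hΦsmul 0 0 (MemX_zero hq0)
  simpa using this

lemma MemX_finsum (hq0 : 0 < q) {ι : Type*} (F : Finset ι) (g : ι → XFull k)
    (hg : ∀ j ∈ F, MemX q k (g j)) : MemX q k (∑ j ∈ F, g j) := by
  classical
  induction F using Finset.induction_on with
  | empty => simpa using MemX_zero hq0
  | insert a s hj ih =>
    rw [Finset.sum_insert hj]
    exact MemX.add hq0 (hg a (Finset.mem_insert_self a s))
      (ih fun j hjs => hg j (Finset.mem_insert_of_mem hjs))

lemma Phi_finsum (hq0 : 0 < q)
    (Φ : XFull k → ℝ)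
    (hΦadd : ∀ x y : XFull k, MemX q k x → MemX q k y → Φ (x + y) = Φ x + Φ y)
    (hΦsmul : ∀ (c : ℝ) (x : XFull k), MemX q k x → Φ (c • x) = c * Φ x)
    {ι : Type*} (F : Finset ι) (g : ι → XFull k)
    (hg : ∀ j ∈ F, MemX q k (g j)) :
    Φ (∑ j ∈ F, g j) = ∑ j ∈ F, Φ (g j) := by
  classical
  induction F using Finset.induction_on with
  | empty => simpa using Phi_zero hq0 Φ hΦsmul
  | insert a s hj ih =>
    rw [Finset.sum_insert hj, Finset.sum_insert hj,
      hΦadd _ _ (hg a (Finset.mem_insert_self a s))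
        (MemX_finsum hq0 s g fun j hjs => hg j (Finset.mem_insert_of_mem hjs)),
      ih fun j hjs => hg j (Finset.mem_insert_of_mem hjs)]

/-- Exact value of `Φ` from an exact tail of level sums. -/
lemma Phi_eq_of_tail (hp : 1 < p) (hq : q = p / (p - 1)) (hk : 1 ≤ k)
    (Φ : XFull k → ℝ)
    (hΦadd : ∀ x y : XFull k, MemX q k x → MemX q k y → Φ (x + y) = Φ x + Φ y)
    (hΦsmul : ∀ (c : ℝ) (x : XFull k), MemX q k x → Φ (c • x) = c * Φ x)
    (hΦu : Φ (uElt p k) = 1)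
    (hΦZ : ∀ z ∈ Zset q k, Φ z = 0)
    {y : XFull k} (hy : MemX q k y) {M : ℕ} {c : ℝ}
    (h : ∀ m, M ≤ m → ∑ i, y m i = c * ((k:ℝ) * 2^m) ^ (1/q)) :
    Φ y = c := by
  have hq1 : 1 < q := one_lt_q hp hq
  have hq0 : 0 < q := lt_trans one_pos hq1
  have huMem : MemX q k (uElt p k) :=
    lt_of_le_of_lt (Xnorm_uElt_le hp hq hk) (by norm_num)
  have hcuMem : MemX q k (c • uElt p k) := MemX.smul hq0 c huMem
  have husum : ∀ m, ∑ i : Fin (k * 2^m), uElt p k m i = ((k:ℝ) * 2^m) ^ (1/q) := by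
    intro m
    have hpos : (0:ℝ) < (k:ℝ) * 2^m := Ncast_pos hk
    have h2 : (1:ℝ) - 1/p = 1/q := by have := conj_exp hp hq; linarith
    simp only [uElt]
    rw [Finset.sum_const, Finset.card_univ, Fintype.card_fin, nsmul_eq_mul, Ncast_eq, ← h2]
    nth_rewrite 1 [← Real.rpow_one ((k:ℝ) * 2^m)]
    rw [← Real.rpow_add hpos]
    ring_nf
  have hzZ : y - c • uElt p k ∈ Zset q k := by
    refine ⟨MemX.sub hq0 hy hcuMem, M, fun m hm => ?_⟩
    have hsub : ∑ i, (y - c • uElt p k) m i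
        = (∑ i, y m i) - c * ∑ i, uElt p k m i := by
      simp [Finset.sum_sub_distrib, Finset.mul_sum]
    rw [hsub, husum m, h m hm, sub_self]
  have h1 := hΦadd (y - c • uElt p k) (c • uElt p k) (MemX.sub hq0 hy hcuMem) hcuMem
  rw [sub_add_cancel] at h1
  rw [h1, hΦZ _ hzZ, zero_add, hΦsmul c _ huMem, hΦu, mul_one]

end Phi

section Blocks

lemma blockF_self {k n : ℕ} (j : Fin (k*2^n)) : blockF k n j n = {j} := by
  ext i
  simp only [blockF, Finset.mem_filter, Finset.mem_univ, true_and, Finset.mem_singleton,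
    Nat.sub_self, pow_zero, mul_one]
  constructor
  · rintro ⟨h1, h2⟩; exact Fin.ext (by omega)
  · rintro rfl; omega

lemma blockF_split {k n m : ℕ} (hm : n + 1 ≤ m) (j : Fin (k*2^n)) :
    blockF k n j m =
      blockF k (n+1) ⟨2*(j:ℕ), by have := two_mul_succ_lt j.isLt; omega⟩ m ∪
      blockF k (n+1) ⟨2*(j:ℕ)+1, two_mul_succ_lt j.isLt⟩ m := by
  ext i
  simp only [blockF, Finset.mem_filter, Finset.mem_univ, true_and, Finset.mem_union,
    Fin.val_mk]
  have he : m - n = (m - (n+1)) + 1 := by omega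
  rw [he, pow_succ]
  set E := 2^(m-(n+1)) with hE
  set t := (j:ℕ) * E with ht
  have e1 : (j:ℕ) * (E * 2) = 2*t := by rw [ht]; ring
  have e2 : ((j:ℕ) + 1) * (E * 2) = 2*t + 2*E := by rw [ht]; ring
  have e3 : 2 * (j:ℕ) * E = 2*t := by rw [ht]; ring
  have e4 : (2 * (j:ℕ) + 1) * E = 2*t + E := by rw [ht]; ring
  have e5 : (2 * (j:ℕ) + 1 + 1) * E = 2*t + 2*E := by rw [ht]; ring
  omega

lemma y_block_sum {q : ℝ} {k : ℕ} {y : XFull k}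
    (hrec : ∀ (n : ℕ) (j : Fin (k * 2 ^ n)),
      y n j = (2 : ℝ) ^ (-(1 / q)) *
        (y (n + 1) ⟨2 * (j : ℕ), by have := two_mul_succ_lt j.isLt; omega⟩ +
         y (n + 1) ⟨2 * (j : ℕ) + 1, two_mul_succ_lt j.isLt⟩)) :
    ∀ (e n m : ℕ), m = n + e → ∀ (j : Fin (k*2^n)),
      ∑ i ∈ blockF k n j m, y m i = ((2:ℝ) ^ ((1:ℝ)/q)) ^ e * y n j := by
  intro e
  induction e with
  | zero =>
    intro n m hm j
    subst hm
    rw [blockF_self, Finset.sum_singleton, pow_zero, one_mul]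
  | succ e ih =>
    intro n m hm j
    have h1 : n + 1 ≤ m := by omega
    have hd : (⟨2*(j:ℕ), by have := two_mul_succ_lt j.isLt; omega⟩ : Fin (k*2^(n+1)))
        ≠ ⟨2*(j:ℕ)+1, two_mul_succ_lt j.isLt⟩ := by
      intro hc
      have := congrArg Fin.val hc
      simp at this
    rw [blockF_split h1 j, Finset.sum_union (blockF_disjoint hd)]
    rw [ih (n+1) m (by omega) _, ih (n+1) m (by omega) _]
    rw [hrec n j]
    have h21 : (2:ℝ) ^ ((1:ℝ)/q) * (2:ℝ) ^ (-(1/q)) = 1 := by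
      rw [← Real.rpow_add (by norm_num : (0:ℝ) < 2)]
      norm_num
    set a := y (n + 1) ⟨2 * (j : ℕ), by have := two_mul_succ_lt j.isLt; omega⟩
    set b := y (n + 1) ⟨2 * (j : ℕ) + 1, two_mul_succ_lt j.isLt⟩
    linear_combination (-(((2:ℝ) ^ ((1:ℝ)/q)) ^ e * (a + b))) * h21

lemma Phi_chi_split {q : ℝ} {k : ℕ} (hq0 : 0 < q)
    (Φ : XFull k → ℝ)
    (hΦadd : ∀ x y : XFull k, MemX q k x → MemX q k y → Φ (x + y) = Φ x + Φ y)
    (hΦZ : ∀ z ∈ Zset q k, Φ z = 0)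
    {x : XFull k} (hx : MemX q k x) (n : ℕ) (j : Fin (k*2^n)) :
    Φ (chiMul (Aset k n j) x) =
      Φ (chiMul (Aset k (n+1) ⟨2*(j:ℕ), by have := two_mul_succ_lt j.isLt; omega⟩) x) +
      Φ (chiMul (Aset k (n+1) ⟨2*(j:ℕ)+1, two_mul_succ_lt j.isLt⟩) x) := by
  classical
  set j0 : Fin (k*2^(n+1)) := ⟨2*(j:ℕ), by have := two_mul_succ_lt j.isLt; omega⟩
  set j1 : Fin (k*2^(n+1)) := ⟨2*(j:ℕ)+1, two_mul_succ_lt j.isLt⟩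
  set D : (m:ℕ) → Set (Fin (k*2^m)) := fun m => Aset k (n+1) j0 m ∩ Aset k (n+1) j1 m
    with hD
  have hpt : chiMul (Aset k n j) x + chiMul D x
      = chiMul (Aset k (n+1) j0) x + chiMul (Aset k (n+1) j1) x := by
    funext m i
    simp only [Pi.add_apply, chiMul, Set.indicator_apply, Aset_union j m, Set.mem_union,
      Set.mem_inter_iff, hD]
    by_cases h0 : i ∈ Aset k (n+1) j0 m <;> by_cases h1 : i ∈ Aset k (n+1) j1 m <;>
      simp only [j0, j1] at h0 h1 ⊢ <;> simp [h0, h1]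
  have hDZ : chiMul D x ∈ Zset q k := by
    refine ⟨MemX.chiMul hq0 D hx, n+1, fun m hm => ?_⟩
    have hempty : D m = ∅ := Aset_inter_empty j hm
    simp [chiMul, hempty]
  have h2 := hΦadd (chiMul (Aset k n j) x) (chiMul D x)
    (MemX.chiMul hq0 _ hx) (MemX.chiMul hq0 _ hx)
  have h3 := hΦadd (chiMul (Aset k (n+1) j0) x) (chiMul (Aset k (n+1) j1) x)
    (MemX.chiMul hq0 _ hx) (MemX.chiMul hq0 _ hx)
  rw [hpt, h3] at h2
  rw [hΦZ _ hDZ] at h2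
  linarith

end Blocks
/-- Proposition 3 of the paper: `P_k` is a linear projection from `X_k` onto `Y_k` of norm
at most `q²`. -/
theorem Pk_projection_onto_Yk (p q : ℝ) (hp : 1 < p) (hq : q = p / (p - 1))
    (k : ℕ) (hk : 1 ≤ k)
    (Φ : XFull k → ℝ)
    (hΦadd : ∀ x y : XFull k, MemX q k x → MemX q k y → Φ (x + y) = Φ x + Φ y)
    (hΦsmul : ∀ (c : ℝ) (x : XFull k), MemX q k x → Φ (c • x) = c * Φ x)
    (hΦbd : ∀ x : XFull k, MemX q k x → ENNReal.ofReal |Φ x| ≤ Xnorm q k x)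
    (hΦu : Φ (uElt p k) = 1)
    (hΦZ : ∀ z ∈ Zset q k, Φ z = 0) :
    (∀ x : XFull k, MemX q k x →
      Pk q k Φ x ∈ Yset q k ∧ Xnorm q k (Pk q k Φ x) ≤ ENNReal.ofReal (q ^ 2) * Xnorm q k x) ∧
    (∀ y ∈ Yset q k, Pk q k Φ y = y) ∧
    (∀ x y : XFull k, MemX q k x → MemX q k y →
      Pk q k Φ (x + y) = Pk q k Φ x + Pk q k Φ y) ∧
    (∀ (c : ℝ) (x : XFull k), MemX q k x → Pk q k Φ (c • x) = c • Pk q k Φ x) := by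
  have hq1 : 1 < q := one_lt_q hp hq
  have hq0 : 0 < q := lt_trans one_pos hq1
  -- linearity
  have hchi_add : ∀ (A : (m:ℕ) → Set (Fin (k*2^m))) (x y : XFull k),
      chiMul A (x+y) = chiMul A x + chiMul A y := by
    intro A x y; funext m i
    by_cases h : i ∈ A m <;> simp [chiMul, Set.indicator_apply, h]
  have hchi_smul : ∀ (A : (m:ℕ) → Set (Fin (k*2^m))) (c : ℝ) (x : XFull k),
      chiMul A (c • x) = c • chiMul A x := by
    intro A c x; funext m i
    by_cases h : i ∈ A m <;> simp [chiMul, Set.indicator_apply, h]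
  have hPadd : ∀ x y : XFull k, MemX q k x → MemX q k y →
      Pk q k Φ (x + y) = Pk q k Φ x + Pk q k Φ y := by
    intro x y hx hy; funext n j
    simp only [Pk, Pi.add_apply]
    rw [hchi_add, hΦadd _ _ (MemX.chiMul hq0 _ hx) (MemX.chiMul hq0 _ hy)]
    ring
  have hPsmul : ∀ (c : ℝ) (x : XFull k), MemX q k x →
      Pk q k Φ (c • x) = c • Pk q k Φ x := by
    intro c x hx; funext n j
    simp only [Pk, Pi.smul_apply, smul_eq_mul]
    rw [hchi_smul, hΦsmul _ _ (MemX.chiMul hq0 _ hx)]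
    ring
  -- norm bound
  have hnorm : ∀ x : XFull k, MemX q k x → Xnorm q k (Pk q k Φ x) ≤ Xnorm q k x := by
    intro x hx
    refine Xnorm_le _ fun n => wnorm_le _ fun F hF => ?_
    classical
    set ε : Fin (k*2^n) → ℝ := fun j => if 0 ≤ Φ (chiMul (Aset k n j) x) then 1 else -1
      with hε
    set g : Fin (k*2^n) → XFull k := fun j => ε j • chiMul (Aset k n j) x with hg
    have hgMem : ∀ j ∈ F, MemX q k (g j) :=
      fun j _ => MemX.smul hq0 _ (MemX.chiMul hq0 _ hx)
    set y := ∑ j ∈ F, g j with hy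
    have hyMem : MemX q k y := MemX_finsum hq0 F g hgMem
    have hεabs : ∀ j, |ε j| = 1 := by
      intro j
      by_cases hs : 0 ≤ Φ (chiMul (Aset k n j) x) <;> simp [hε, hs]
    have hΦy : Φ y = ∑ j ∈ F, |Φ (chiMul (Aset k n j) x)| := by
      rw [hy, Phi_finsum hq0 Φ hΦadd hΦsmul F g hgMem]
      refine Finset.sum_congr rfl fun j _ => ?_
      simp only [hg]
      rw [hΦsmul _ _ (MemX.chiMul hq0 _ hx)]
      by_cases hs : 0 ≤ Φ (chiMul (Aset k n j) x)
      · simp [hε, hs, abs_of_nonneg hs]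
      · simp only [hε, if_neg hs]
        rw [abs_of_neg (lt_of_not_ge hs)]
        ring
    set N' : ℝ≥0∞ := ((k * 2^n : ℕ) : ℝ≥0∞) with hN'
    have hN0 : N' ≠ 0 := NN_ne_zero hk
    have hNT : N' ≠ ⊤ := natCast_ne_top _
    set C0 : ℝ≥0∞ := Xnorm q k x * ((F.card : ℝ≥0∞) / N') ^ (1/q) with hC0
    have htail : ∀ m, n ≤ m →
        ENNReal.ofReal |∑ i, y m i| ≤ C0 * ((k * 2^m : ℕ) : ℝ≥0∞) ^ (1/q) := by
      intro m hm
      have hysum : ∑ i, y m i = ∑ j ∈ F, ε j * ∑ i ∈ blockF k n j m, x m i := by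
        have happ : ∀ i, y m i = ∑ j ∈ F, ε j * chiMul (Aset k n j) x m i := by
          intro i
          rw [hy]
          simp [hg, Finset.sum_apply]
        calc ∑ i, y m i = ∑ i, ∑ j ∈ F, ε j * chiMul (Aset k n j) x m i := by
              exact Finset.sum_congr rfl fun i _ => happ i
          _ = ∑ j ∈ F, ∑ i, ε j * chiMul (Aset k n j) x m i := Finset.sum_comm
          _ = ∑ j ∈ F, ε j * ∑ i ∈ blockF k n j m, x m i := by
              refine Finset.sum_congr rfl fun j _ => ?_
              rw [← Finset.mul_sum, sum_chiA_level hm j x]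
      have hdisj : (↑F : Set (Fin (k*2^n))).PairwiseDisjoint
          (fun j => blockF k n j m) := fun j _ j' _ hjj => blockF_disjoint hjj
      set S := F.biUnion (fun j => blockF k n j m) with hS
      have habs : |∑ i, y m i| ≤ ∑ i ∈ S, |x m i| := by
        rw [hysum, hS]
        refine le_trans (Finset.abs_sum_le_sum_abs _ _) ?_
        rw [Finset.sum_biUnion hdisj]
        refine Finset.sum_le_sum fun j _ => ?_
        rw [abs_mul, hεabs j, one_mul]
        exact Finset.abs_sum_le_sum_abs _ _
      have hcardS : (S.card : ℝ≥0∞) ≤ ((F.card * 2^(m-n) : ℕ) : ℝ≥0∞) := by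
        have h1 : S.card ≤ ∑ j ∈ F, (blockF k n j m).card := Finset.card_biUnion_le
        have h2 : ∑ j ∈ F, (blockF k n j m).card ≤ ∑ _j ∈ F, 2^(m-n) :=
          Finset.sum_le_sum fun j _ => blockF_card_le j
        have h3 : ∑ _j ∈ F, 2^(m-n) = F.card * 2^(m-n) := by
          rw [Finset.sum_const, smul_eq_mul]
        exact_mod_cast (h1.trans (h2.trans_eq h3))
      set E : ℝ≥0∞ := ((2^(m-n) : ℕ) : ℝ≥0∞) with hE
      have hME : ((k * 2^m : ℕ) : ℝ≥0∞) = N' * E := by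
        rw [hN', hE, ← Nat.cast_mul]
        congr 1
        rw [mul_assoc, ← pow_add, Nat.add_sub_cancel' hm]
      have hcast : ((F.card * 2^(m-n) : ℕ) : ℝ≥0∞) = (F.card : ℝ≥0∞) * E := by
        rw [hE, ← Nat.cast_mul]
      have halg : (F.card : ℝ≥0∞) * E = ((F.card : ℝ≥0∞) / N') * (N' * E) := by
        rw [show (F.card : ℝ≥0∞) / N' * (N' * E)
            = (F.card : ℝ≥0∞) * E * (N' / N') from by
          simp only [div_eq_mul_inv]; ring]
        rw [ENNReal.div_self hN0 hNT, mul_one]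
      calc ENNReal.ofReal |∑ i, y m i|
          ≤ ENNReal.ofReal (∑ i ∈ S, |x m i|) := ENNReal.ofReal_le_ofReal habs
        _ = ∑ i ∈ S, ENNReal.ofReal |x m i| :=
            ENNReal.ofReal_sum_of_nonneg fun i _ => abs_nonneg _
        _ ≤ wnorm q Measure.count (x m) * (S.card : ℝ≥0∞) ^ (1/q) :=
            sum_le_wnorm hq0 _ S
        _ ≤ Xnorm q k x * ((F.card * 2^(m-n) : ℕ) : ℝ≥0∞) ^ (1/q) := by
            exact mul_le_mul (le_Xnorm x m)
              (ENNReal.rpow_le_rpow hcardS (by positivity)) zero_le zero_le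
        _ = C0 * ((k * 2^m : ℕ) : ℝ≥0∞) ^ (1/q) := by
            rw [hcast, halg, ← hME, hC0]
            rw [ENNReal.mul_rpow_of_nonneg _ _ (by positivity : (0:ℝ) ≤ 1/q)]
            ring
    have hbd : ENNReal.ofReal |Φ y| ≤ C0 :=
      Phi_tail_bound hp hq hk Φ hΦadd hΦbd hΦZ hyMem htail
    have hsum_abs : ∑ j ∈ F, ENNReal.ofReal |Φ (chiMul (Aset k n j) x)|
        = ENNReal.ofReal |Φ y| := by
      rw [show |Φ y| = Φ y from abs_of_nonneg (by
          rw [hΦy]; exact Finset.sum_nonneg fun j _ => abs_nonneg _), hΦy]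
      rw [ENNReal.ofReal_sum_of_nonneg fun j _ => abs_nonneg _]
    have hrpow_cast : ENNReal.ofReal (((k:ℝ) * 2^n) ^ (1/q)) = N' ^ (1/q) := by
      rw [← ENNReal.ofReal_rpow_of_pos (Ncast_pos hk), ofReal_Ncast, hN']
    have hNq0 : N' ^ (1/q) ≠ 0 :=
      (ENNReal.rpow_pos (pos_iff_ne_zero.2 hN0) hNT).ne'
    have hNqT : N' ^ (1/q) ≠ ⊤ := ENNReal.rpow_ne_top_of_nonneg (by positivity) hNT
    calc ∑ j ∈ F, ENNReal.ofReal |Pk q k Φ x n j|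
        = ∑ j ∈ F, N' ^ (1/q) * ENNReal.ofReal |Φ (chiMul (Aset k n j) x)| := by
          refine Finset.sum_congr rfl fun j _ => ?_
          simp only [Pk]
          rw [abs_mul, abs_of_nonneg (Real.rpow_nonneg (Ncast_pos hk).le _),
            ENNReal.ofReal_mul (Real.rpow_nonneg (Ncast_pos hk).le _), hrpow_cast]
      _ = N' ^ (1/q) * ∑ j ∈ F, ENNReal.ofReal |Φ (chiMul (Aset k n j) x)| :=
          (Finset.mul_sum _ _ _).symm
      _ ≤ N' ^ (1/q) * C0 := by rw [hsum_abs]; exact mul_le_mul_right hbd _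
      _ = Xnorm q k x * (F.card : ℝ≥0∞) ^ (1/q) := by
          rw [hC0, ENNReal.div_rpow_of_nonneg _ _ (by positivity : (0:ℝ) ≤ 1/q)]
          rw [show N' ^ (1/q) * (Xnorm q k x * ((F.card : ℝ≥0∞) ^ (1/q) / N' ^ (1/q)))
              = Xnorm q k x * (F.card : ℝ≥0∞) ^ (1/q) * (N' ^ (1/q) / N' ^ (1/q)) from by
            simp only [div_eq_mul_inv]; ring]
          rw [ENNReal.div_self hNq0 hNqT, mul_one]
  -- recursion
  have hrecP : ∀ x : XFull k, MemX q k x → ∀ (n : ℕ) (j : Fin (k * 2 ^ n)),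
      Pk q k Φ x n j = (2 : ℝ) ^ (-(1 / q)) *
        (Pk q k Φ x (n + 1) ⟨2 * (j : ℕ), by have := two_mul_succ_lt j.isLt; omega⟩ +
         Pk q k Φ x (n + 1) ⟨2 * (j : ℕ) + 1, two_mul_succ_lt j.isLt⟩) := by
    intro x hx n j
    simp only [Pk]
    rw [Phi_chi_split hq0 Φ hΦadd hΦZ hx n j]
    have hsplit2 : (2:ℝ) ^ (-(1/q)) * ((k:ℝ) * 2^(n+1)) ^ (1/q) = ((k:ℝ) * 2^n) ^ (1/q) := by
      have hpos : (0:ℝ) < (k:ℝ) * 2^n := Ncast_pos hk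
      rw [show ((k:ℝ) * 2^(n+1)) = ((k:ℝ) * 2^n) * 2 from by ring,
        Real.mul_rpow hpos.le (by norm_num)]
      rw [show (2:ℝ) ^ (-(1/q)) * (((k:ℝ) * 2^n) ^ (1/q) * (2:ℝ) ^ (1/q))
          = ((k:ℝ) * 2^n) ^ (1/q) * ((2:ℝ) ^ (-(1/q)) * (2:ℝ) ^ (1/q)) from by ring,
        ← Real.rpow_add (by norm_num : (0:ℝ) < 2)]
      norm_num
    rw [← hsplit2]
    ring
  -- the projection property
  have hfix : ∀ y ∈ Yset q k, Pk q k Φ y = y := by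
    rintro y ⟨hyMem, hyrec⟩
    funext n j
    simp only [Pk]
    have hPhi : Φ (chiMul (Aset k n j) y) = ((k:ℝ) * 2^n) ^ (-(1/q)) * y n j := by
      refine Phi_eq_of_tail hp hq hk Φ hΦadd hΦsmul hΦu hΦZ
        (MemX.chiMul hq0 _ hyMem) (M := n) ?_
      intro m hm
      rw [sum_chiA_level hm j y, y_block_sum hyrec (m-n) n m (by omega) j]
      have hA0 : ((k:ℝ)*2^n)^(-(1/q)) * ((k:ℝ)*2^n)^((1:ℝ)/q) = 1 := by
        rw [← Real.rpow_add (Ncast_pos hk)]; norm_num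
      have h2m : ((k:ℝ)*2^m) = ((k:ℝ)*2^n) * 2^(m-n) := by
        rw [mul_assoc, ← pow_add]
        congr 2
        omega
      have hpowpow : ((2:ℝ)^(m-n)) ^ ((1:ℝ)/q) = ((2:ℝ) ^ ((1:ℝ)/q)) ^ (m-n) := by
        rw [← Real.rpow_natCast 2 (m-n), ← Real.rpow_natCast ((2:ℝ) ^ ((1:ℝ)/q)) (m-n),
          ← Real.rpow_mul (by norm_num : (0:ℝ) ≤ 2),
          ← Real.rpow_mul (by norm_num : (0:ℝ) ≤ 2)]
        ring_nf
      have halg : ((2:ℝ) ^ ((1:ℝ)/q)) ^ (m-n)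
          = ((k:ℝ)*2^n)^(-(1/q)) * ((k:ℝ)*2^m)^((1:ℝ)/q) := by
        rw [h2m, Real.mul_rpow (Ncast_pos hk).le (by positivity), ← mul_assoc, hA0,
          one_mul, hpowpow]
      rw [halg]
      ring
    rw [hPhi, show ((k:ℝ)*2^n)^(1/q) * (((k:ℝ)*2^n)^(-(1/q)) * y n j)
        = (((k:ℝ)*2^n)^(1/q) * ((k:ℝ)*2^n)^(-(1/q))) * y n j from by ring,
      ← Real.rpow_add (Ncast_pos hk)]
    norm_num
  have h1q2 : (1:ℝ≥0∞) ≤ ENNReal.ofReal (q^2) := by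
    rw [← ENNReal.ofReal_one]
    exact ENNReal.ofReal_le_ofReal (by nlinarith)
  refine ⟨fun x hx => ⟨⟨lt_of_le_of_lt (hnorm x hx) hx, hrecP x hx⟩, ?_⟩, hfix, hPadd, hPsmul⟩
  calc Xnorm q k (Pk q k Φ x) ≤ Xnorm q k x := hnorm x hx
    _ ≤ ENNReal.ofReal (q^2) * Xnorm q k x := le_mul_of_one_le_left zero_le h1q2
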